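/- For every ε > 0 the function k_ε is twice continuously differentiable on ℝ; moreover its first derivative is given by k'_ε(r) = 2r for r < −ε, k'_ε(r) = −(2r³/ε² + 4r²/ε) for −ε ≤ r < 0, and k'_ε(r) = 0 for r ≥ 0, and its second derivative is given by k''_ε(r) = 2 for r < −ε, k''_ε(r) = −(6r²/ε² + 8r/ε) for −ε ≤ r < 0, and k''_ε(r) = 0 for r ≥ 0. -/

import Mathlib

/-- The C²-regularization `k_ε` of the squared negative part. -/
noncomputable def kEps (ε : ℝ) : ℝ → ℝ := fun r =>
  if r < -ε then r ^ 2 - ε ^ 2 / 6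
  else if r < 0 then -(r ^ 3 / ε) * (r / (2 * ε) + 4 / 3)
  else 0

open Set

/-- Glue one-sided derivatives. -/
lemma hasDerivAt_glue {f : ℝ → ℝ} {f' a : ℝ}
    (hl : HasDerivWithinAt f f' (Iic a) a) (hr : HasDerivWithinAt f f' (Ici a) a) :
    HasDerivAt f f' a := by
  have h := hl.union hr
  rw [Iic_union_Ici] at h
  exact hasDerivWithinAt_univ.mp h

/-- Derivative of a two-junction piecewise function with matching values. -/
lemma piecewise_hasDerivAt (ε : ℝ) (hε : 0 < ε) (pL pM dL dM : ℝ → ℝ)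
    (hL : ∀ r, HasDerivAt pL (dL r) r) (hM : ∀ r, HasDerivAt pM (dM r) r)
    (hLM : pL (-ε) = pM (-ε)) (hM0 : pM 0 = 0)
    (hdLM : dL (-ε) = dM (-ε)) (hdM0 : dM 0 = 0) (r : ℝ) :
    HasDerivAt (fun x => if x < -ε then pL x else if x < 0 then pM x else 0)
      (if r < -ε then dL r else if r < 0 then dM r else 0) r := by
  set F : ℝ → ℝ := fun x => if x < -ε then pL x else if x < 0 then pM x else 0 with hF
  have hFL : EqOn F pL (Iic (-ε)) := by
    intro x hx
    rcases lt_or_eq_of_le (mem_Iic.mp hx) with h | h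
    · simp [hF, h]
    · subst h
      simp only [hF, lt_irrefl, if_false, show (-ε : ℝ) < 0 by linarith, if_true]
      exact hLM.symm
  have hFM : EqOn F pM (Icc (-ε) 0) := by
    intro x hx
    rcases lt_or_eq_of_le hx.2 with h | h
    · simp [hF, not_lt.mpr hx.1, h]
    · subst h
      simp [hF, not_lt.mpr hx.1, hM0]
  have hFR : EqOn F (fun _ => (0 : ℝ)) (Ici 0) := by
    intro x hx
    have hx0 : (0:ℝ) ≤ x := mem_Ici.mp hx
    simp [hF, not_lt.mpr hx0, not_lt.mpr (show -ε ≤ x by linarith)]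
  rcases lt_trichotomy r (-ε) with h1 | h1 | h1
  · rw [if_pos h1]
    refine (hL r).congr_of_eventuallyEq ?_
    filter_upwards [Iio_mem_nhds h1] with x hx
    exact hFL (mem_Iic.mpr (le_of_lt hx))
  · subst h1
    rw [if_neg (lt_irrefl _), if_pos (show (-ε : ℝ) < 0 by linarith), ← hdLM]
    apply hasDerivAt_glue
    · exact ((hL (-ε)).hasDerivWithinAt).congr hFL (hFL (mem_Iic.mpr (le_refl _)))
    · have h := ((hM (-ε)).hasDerivWithinAt (s := Icc (-ε) 0)).congr hFM
        (hFM (mem_Icc.mpr ⟨le_refl _, by linarith⟩))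
      rw [hdLM]
      exact h.mono_of_mem_nhdsWithin (Icc_mem_nhdsGE_of_mem ⟨le_refl _, by linarith⟩)
  · rw [if_neg (not_lt.mpr (le_of_lt h1))]
    rcases lt_trichotomy r 0 with h2 | h2 | h2
    · rw [if_pos h2]
      refine (hM r).congr_of_eventuallyEq ?_
      filter_upwards [Ioo_mem_nhds h1 h2] with x hx
      exact hFM (mem_Icc.mpr ⟨le_of_lt hx.1, le_of_lt hx.2⟩)
    · subst h2
      rw [if_neg (lt_irrefl _)]
      have key : HasDerivAt F (dM 0) 0 := by
        apply hasDerivAt_glue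
        · have h := ((hM 0).hasDerivWithinAt (s := Icc (-ε) 0)).congr hFM
            (hFM (mem_Icc.mpr ⟨by linarith, le_refl _⟩))
          exact h.mono_of_mem_nhdsWithin (Icc_mem_nhdsLE_of_mem ⟨by linarith, le_refl _⟩)
        · rw [hdM0]
          exact ((hasDerivAt_const 0 (0:ℝ)).hasDerivWithinAt).congr hFR
            (hFR (mem_Ici.mpr (le_refl _)))
      simpa [hdM0] using key
    · rw [if_neg (not_lt.mpr (le_of_lt h2))]
      refine (hasDerivAt_const r (0:ℝ)).congr_of_eventuallyEq ?_
      filter_upwards [Ioi_mem_nhds h2] with x hx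
      exact hFR (mem_Ici.mpr (le_of_lt hx))

/-- Continuity of a two-junction piecewise function with matching values. -/
lemma piecewise_continuous (ε : ℝ) (hε : 0 < ε) (pL pM : ℝ → ℝ)
    (hL : Continuous pL) (hM : Continuous pM)
    (hLM : pL (-ε) = pM (-ε)) (hM0 : pM 0 = 0) :
    Continuous (fun x => if x < -ε then pL x else if x < 0 then pM x else 0) := by
  have heq : (fun x => if x < -ε then pL x else if x < 0 then pM x else 0)
      = fun x => if x ≤ -ε then pL x else if x ≤ 0 then pM x else 0 := by
    funext x
    rcases lt_trichotomy x (-ε) with h1 | h1 | h1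
    · simp [h1, le_of_lt h1]
    · subst h1
      simp [lt_irrefl, le_refl, show (-ε : ℝ) < 0 by linarith, hLM]
    · rw [if_neg (not_lt.mpr (le_of_lt h1)), if_neg (not_le.mpr h1)]
      rcases lt_trichotomy x 0 with h2 | h2 | h2
      · simp [h2, le_of_lt h2]
      · subst h2
        simp [hM0]
      · simp [not_lt.mpr (le_of_lt h2), not_le.mpr h2]
  rw [heq]
  have hinner : Continuous fun x : ℝ => if x ≤ 0 then pM x else 0 :=
    Continuous.if_le hM continuous_const continuous_id continuous_const
      (fun x hx => by rw [hx, hM0])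
  exact Continuous.if_le hL hinner continuous_id continuous_const
    (fun x hx => by
      rw [hx]
      simp [show (-ε : ℝ) ≤ 0 by linarith, hLM])

set_option maxHeartbeats 1000000 in
theorem kEps_contDiff_and_derivs (ε : ℝ) (hε : 0 < ε) :
    ContDiff ℝ 2 (kEps ε) ∧
    (∀ r : ℝ, deriv (kEps ε) r =
      if r < -ε then 2 * r
      else if r < 0 then -(2 * r ^ 3 / ε ^ 2 + 4 * r ^ 2 / ε)
      else 0) ∧
    (∀ r : ℝ, deriv (deriv (kEps ε)) r =
      if r < -ε then 2
      else if r < 0 then -(6 * r ^ 2 / ε ^ 2 + 8 * r / ε)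
      else 0) := by
  have hε' : ε ≠ 0 := ne_of_gt hε
  -- derivatives of the three pieces
  have hL1 : ∀ r : ℝ, HasDerivAt (fun x : ℝ => x ^ 2 - ε ^ 2 / 6) (2 * r) r := by
    intro r
    have := (hasDerivAt_pow 2 r).sub_const (ε ^ 2 / 6)
    exact this.congr_deriv (by ring)
  have hM1 : ∀ r : ℝ, HasDerivAt (fun x : ℝ => -(x ^ 3 / ε) * (x / (2 * ε) + 4 / 3))
      (-(2 * r ^ 3 / ε ^ 2 + 4 * r ^ 2 / ε)) r := by
    intro r
    have h1 : HasDerivAt (fun x : ℝ => -(x ^ 3 / ε)) (-(3 * r ^ 2 / ε)) r := by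
      have := ((hasDerivAt_pow 3 r).div_const ε).neg
      exact this.congr_deriv (by ring)
    have h2 : HasDerivAt (fun x : ℝ => x / (2 * ε) + 4 / 3) (1 / (2 * ε)) r :=
      ((hasDerivAt_id r).div_const (2 * ε)).add_const (4 / 3 : ℝ)
    have := h1.mul h2
    refine this.congr_deriv ?_
    field_simp
    ring
  have hL2 : ∀ r : ℝ, HasDerivAt (fun x : ℝ => 2 * x) (2 : ℝ) r := by
    intro r
    simpa using (hasDerivAt_id r).const_mul (2 : ℝ)
  have hM2 : ∀ r : ℝ, HasDerivAt (fun x : ℝ => -(2 * x ^ 3 / ε ^ 2 + 4 * x ^ 2 / ε))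
      (-(6 * r ^ 2 / ε ^ 2 + 8 * r / ε)) r := by
    intro r
    have h1 : HasDerivAt (fun x : ℝ => 2 * x ^ 3 / ε ^ 2) (6 * r ^ 2 / ε ^ 2) r := by
      have := (((hasDerivAt_pow 3 r).const_mul (2 : ℝ)).div_const (ε ^ 2))
      exact this.congr_deriv (by ring)
    have h2 : HasDerivAt (fun x : ℝ => 4 * x ^ 2 / ε) (8 * r / ε) r := by
      have := (((hasDerivAt_pow 2 r).const_mul (4 : ℝ)).div_const ε)
      exact this.congr_deriv (by ring)
    exact (h1.add h2).neg
  -- junction matching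
  have e1 : (fun x : ℝ => x ^ 2 - ε ^ 2 / 6) (-ε)
      = (fun x : ℝ => -(x ^ 3 / ε) * (x / (2 * ε) + 4 / 3)) (-ε) := by
    field_simp; ring
  have e2 : (fun x : ℝ => -(x ^ 3 / ε) * (x / (2 * ε) + 4 / 3)) (0 : ℝ) = 0 := by
    simp
  have e3 : (fun x : ℝ => 2 * x) (-ε)
      = (fun x : ℝ => -(2 * x ^ 3 / ε ^ 2 + 4 * x ^ 2 / ε)) (-ε) := by
    field_simp; ring
  have e4 : (fun x : ℝ => -(2 * x ^ 3 / ε ^ 2 + 4 * x ^ 2 / ε)) (0 : ℝ) = 0 := by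
    simp
  have e5 : (fun _ : ℝ => (2 : ℝ)) (-ε)
      = (fun x : ℝ => -(6 * x ^ 2 / ε ^ 2 + 8 * x / ε)) (-ε) := by
    field_simp; ring
  have e6 : (fun x : ℝ => -(6 * x ^ 2 / ε ^ 2 + 8 * x / ε)) (0 : ℝ) = 0 := by
    simp
  -- first derivative
  have hd1 : ∀ r : ℝ, HasDerivAt (kEps ε)
      (if r < -ε then 2 * r else if r < 0 then -(2 * r ^ 3 / ε ^ 2 + 4 * r ^ 2 / ε) else 0) r := by
    intro r
    exact piecewise_hasDerivAt ε hε _ _ _ _ hL1 hM1 e1 e2 e3 e4 r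
  have hderiv1 : deriv (kEps ε) = fun r =>
      if r < -ε then 2 * r else if r < 0 then -(2 * r ^ 3 / ε ^ 2 + 4 * r ^ 2 / ε) else 0 :=
    funext fun r => (hd1 r).deriv
  have hd2 : ∀ r : ℝ, HasDerivAt (deriv (kEps ε))
      (if r < -ε then 2 else if r < 0 then -(6 * r ^ 2 / ε ^ 2 + 8 * r / ε) else 0) r := by
    intro r
    rw [hderiv1]
    have h := piecewise_hasDerivAt ε hε _ _ (fun _ : ℝ => (2 : ℝ)) _ hL2 hM2 e3 e4 e5 e6 r
    convert h using 2
  have hderiv2 : deriv (deriv (kEps ε)) = fun r =>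
      if r < -ε then (2:ℝ) else if r < 0 then -(6 * r ^ 2 / ε ^ 2 + 8 * r / ε) else 0 :=
    funext fun r => (hd2 r).deriv
  have hcont2 : Continuous (deriv (deriv (kEps ε))) := by
    rw [hderiv2]
    have hc : Continuous fun x : ℝ => -(6 * x ^ 2 / ε ^ 2 + 8 * x / ε) :=
      (((continuous_const.mul (continuous_pow 2)).div_const (ε ^ 2)).add
        ((continuous_const.mul continuous_id).div_const ε)).neg
    exact piecewise_continuous ε hε _ _ continuous_const hc e5 e6
  refine ⟨?_, fun r => by rw [hderiv1], fun r => by rw [hderiv2]⟩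
  rw [show (2 : WithTop ℕ∞) = 1 + 1 by rfl, contDiff_succ_iff_deriv]
  refine ⟨fun r => (hd1 r).differentiableAt, by simp, ?_⟩
  rw [show (1 : WithTop ℕ∞) = 0 + 1 by rfl, contDiff_succ_iff_deriv]
  exact ⟨fun r => (hd2 r).differentiableAt, by simp, contDiff_zero.mpr hcont2⟩
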